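/- In the GYNI game with N players, each deterministic local strategy (a family of functions a_i : {0,1} → {0,1}) can win on at most two input strings, and these two strings are bitwise complements of each other. Consequently, the maximal classical winning probability equals max over input strings x of q(x) + q(x̄), where x̄ is the bitwise complement of x. -/

import Mathlib

/-- The GYNI game with `N` players on a ring: player `i` receives input bit `x i`
and outputs `a i (x i)`; the players win iff `a i (x i) = x (i+1)` for all `i`
(indices mod `N`).  Every deterministic local strategy wins on at most two input
strings, which are bitwise complements of each other, and consequently the
maximal classical winning probability equals `max_x (q x + q x̄)`. -/
theorem gyni_classical_bound (N : ℕ) [NeZero N]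
    (q : (Fin N → Bool) → ℝ) (hq : ∀ x, 0 ≤ q x) :
    (∀ a : Fin N → Bool → Bool, ∀ y z : Fin N → Bool,
        (∀ i, a i (y i) = y (i + 1)) → (∀ i, a i (z i) = z (i + 1)) →
        z = y ∨ z = fun i => !y i) ∧
    IsGreatest
      {w : ℝ | ∃ a : Fin N → Bool → Bool,
        w = ∑ x : Fin N → Bool,
          if ∀ i, a i (x i) = x (i + 1) then q x else 0}
      (Finset.univ.sup' Finset.univ_nonempty
        (fun x : Fin N → Bool => q x + q (fun i => !x i))) := by
  have key : ∀ a : Fin N → Bool → Bool, ∀ y z : Fin N → Bool,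
      (∀ i, a i (y i) = y (i + 1)) → (∀ i, a i (z i) = z (i + 1)) →
      z = y ∨ z = fun i => !y i := by
    intro a y z hy hz
    have step : ∀ i, z i = y i → z (i + 1) = y (i + 1) := by
      intro i h
      rw [← hz i, h, hy i]
    by_cases h : ∃ j, z j = y j
    · left
      obtain ⟨j, hj⟩ := h
      open Fin.NatCast in
      have all : ∀ k : ℕ, z (j + (k : Fin N)) = y (j + (k : Fin N)) := by
        intro k
        induction k with
        | zero => simpa using hj
        | succ n ih =>
          have hc : ((n + 1 : ℕ) : Fin N) = (n : Fin N) + 1 := by push_cast; ring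
          rw [hc, ← add_assoc]
          exact step _ ih
      funext i
      have := all (i - j : Fin N).val
      rwa [Fin.cast_val_eq_self, add_comm, sub_add_cancel] at this
    · right
      push_neg at h
      funext i
      have := h i
      cases hyi : y i <;> cases hzi : z i <;> simp_all
  have neq : ∀ y : Fin N → Bool, y ≠ fun i => !y i := by
    intro y h
    have := congrFun h 0
    simp at this
  have pairsum : ∀ y : Fin N → Bool,
      (∑ x : Fin N → Bool,
        ((if x = y then q x else 0) + (if x = (fun i => !y i) then q x else 0)))
      = q y + q (fun i => !y i) := by
    intro y
    rw [Finset.sum_add_distrib]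
    simp [Finset.sum_ite_eq']
  have win_char : ∀ (a : Fin N → Bool → Bool) (y : Fin N → Bool),
      (∀ i, a i (y i) = y (i + 1)) →
      (∑ x : Fin N → Bool, if ∀ i, a i (x i) = x (i + 1) then q x else 0)
        ≤ q y + q (fun i => !y i) := by
    intro a y hy
    rw [← pairsum y]
    apply Finset.sum_le_sum
    intro x _
    by_cases hx : ∀ i, a i (x i) = x (i + 1)
    · rw [if_pos hx]
      rcases key a y x hy hx with h1 | h1 <;> rw [h1] <;>
        simp [neq y, Ne.symm (neq y)]
    · rw [if_neg hx]
      apply add_nonneg <;> (split_ifs <;> simp [hq])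
  refine ⟨key, ?_, ?_⟩
  · obtain ⟨x0, -, hx0⟩ := Finset.exists_mem_eq_sup' Finset.univ_nonempty
      (fun x : Fin N → Bool => q x + q (fun i => !x i))
    refine ⟨fun i b => if b = x0 i then x0 (i + 1) else !x0 (i + 1), ?_⟩
    rw [hx0]
    have hwy : ∀ i, (fun i b => if b = x0 i then x0 (i + 1) else !x0 (i + 1)) i (x0 i)
        = x0 (i + 1) := by intro i; simp
    have hwz : ∀ i, (fun i b => if b = x0 i then x0 (i + 1) else !x0 (i + 1)) i
        ((fun j => !x0 j) i) = (fun j => !x0 j) (i + 1) := by intro i; simp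
    have hiff : ∀ x : Fin N → Bool,
        (∀ i, (fun i b => if b = x0 i then x0 (i + 1) else !x0 (i + 1)) i (x i) = x (i + 1))
          ↔ (x = x0 ∨ x = fun i => !x0 i) := by
      intro x
      constructor
      · intro hx
        exact key (fun i b => if b = x0 i then x0 (i + 1) else !x0 (i + 1)) x0 x hwy hx
      · rintro (rfl | rfl)
        exacts [hwy, hwz]
    rw [← pairsum x0]
    apply Finset.sum_congr rfl
    intro x _
    by_cases h1 : x = x0
    · subst h1; simp [hiff, neq x]
    · by_cases h2 : x = fun i => !x0 i
      · subst h2; simp [hiff, Ne.symm (neq x0)]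
      · simp [hiff, h1, h2]
  · rintro w ⟨a, rfl⟩
    by_cases h : ∃ y : Fin N → Bool, ∀ i, a i (y i) = y (i + 1)
    · obtain ⟨y, hy⟩ := h
      exact le_trans (win_char a y hy)
        (Finset.le_sup' (fun x : Fin N → Bool => q x + q (fun i => !x i))
          (Finset.mem_univ y))
    · have hz : (∑ x : Fin N → Bool, if ∀ i, a i (x i) = x (i + 1) then q x else 0) = 0 :=
        Finset.sum_eq_zero fun x _ => if_neg fun hx => h ⟨x, hx⟩
      rw [hz]
      exact le_trans (add_nonneg (hq _) (hq _))
        (Finset.le_sup' (fun x : Fin N → Bool => q x + q (fun i => !x i))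
          (Finset.mem_univ fun _ => false))
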